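/- Let A be a complex unital Banach algebra, U ⊆ ℂ an open set, and σ : ℂ → ℂ analytic on U with σ(U) ⊆ U. Let 𝔞, 𝔟, 𝔠, 𝔡 ∈ A. Let f : ℂ → A and g, t : ℂ → ℂ be analytic on U and satisfy, for every z ∈ U: g(σ z) = g(z), t(σ z) = t(z), g'(z) ≠ 0, 𝔠·f(z) + 𝔡 is a unit of A, and f(σ z) = (𝔞·f(z) + 𝔟)·(𝔠·f(z) + 𝔡)⁻¹. Define ḟ(z) = g'(z)⁻¹·f'(z), f̈(z) = g'(z)⁻¹·(ḟ)'(z), and f_t(z) = f(z) + t(z)·ḟ(z)·(1 − (t(z)/2)·ḟ(z)⁻¹·f̈(z))⁻¹. Then for every z ∈ U such that ḟ and 1 − (t/2)·ḟ⁻¹·f̈ are units of A at both z and σ z, and such that 𝔠·f_t(z) + 𝔡 is a unit of A, one has f_t(σ z) = (𝔞·f_t(z) + 𝔟)·(𝔠·f_t(z) + 𝔡)⁻¹. -/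

import Mathlib

open Filter


theorem isUnit_of_two_sided {A : Type*} [Monoid A] {x y : A}
    (h1 : x * y = 1) (h2 : y * x = 1) : IsUnit x := ⟨⟨x, y, h1, h2⟩, rfl⟩

theorem inv_unique' {A : Type*} [MonoidWithZero A] {x y : A} (h : IsUnit x)
    (hxy : x * y = 1) : Ring.inverse x = y := by
  calc Ring.inverse x = Ring.inverse x * (x * y) := by rw [hxy, mul_one]
  _ = (Ring.inverse x * x) * y := by rw [mul_assoc]
  _ = y := by rw [Ring.inverse_mul_cancel x h, one_mul]

theorem alg_key {A : Type*} [Ring A] [Algebra ℂ A]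
    (a b c d f₀ f₁ f₂ w₀ w₁ w₂ : A) (tz : ℂ)
    (hq : IsUnit (c * f₀ + d))
    (hw₀ : w₀ = (a * f₀ + b) * Ring.inverse (c * f₀ + d))
    (hw₁ : w₁ = (a - w₀ * c) * f₁ * Ring.inverse (c * f₀ + d))
    (hw₂ : w₂ = (a - w₀ * c) * f₂ * Ring.inverse (c * f₀ + d)
        - (2 : ℂ) • ((a - w₀ * c) * f₁ * Ring.inverse (c * f₀ + d) *
            (c * (f₁ * Ring.inverse (c * f₀ + d)))))
    (hf₁ : IsUnit f₁) (hw₁u : IsUnit w₁)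
    (hru : IsUnit (1 - (tz / 2) • (Ring.inverse f₁ * f₂)))
    (hrwu : IsUnit (1 - (tz / 2) • (Ring.inverse w₁ * w₂)))
    (hftu : IsUnit (c * (f₀ + tz • (f₁ *
        Ring.inverse (1 - (tz / 2) • (Ring.inverse f₁ * f₂)))) + d)) :
    w₀ + tz • (w₁ * Ring.inverse (1 - (tz / 2) • (Ring.inverse w₁ * w₂))) =
      (a * (f₀ + tz • (f₁ * Ring.inverse (1 - (tz / 2) • (Ring.inverse f₁ * f₂)))) + b) *
        Ring.inverse (c * (f₀ + tz • (f₁ *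
          Ring.inverse (1 - (tz / 2) • (Ring.inverse f₁ * f₂)))) + d) := by
  have K : ∀ {x y : A}, x * y = 1 → ∀ z : A, x * (y * z) = z := by
    intro x y h z; rw [← mul_assoc, h, one_mul]
  set q : A := c * f₀ + d with hqdef
  set qi : A := Ring.inverse q with hqidef
  have hqqi : q * qi = 1 := Ring.mul_inverse_cancel q hq
  have hqiq : qi * q = 1 := Ring.inverse_mul_cancel q hq
  set p : A := a - w₀ * c with hpdef
  set F : A := Ring.inverse f₁ with hFdef
  have hff : f₁ * F = 1 := Ring.mul_inverse_cancel _ hf₁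
  have hff' : F * f₁ = 1 := Ring.inverse_mul_cancel _ hf₁
  set W : A := Ring.inverse w₁ with hWdef
  have hww : w₁ * W = 1 := Ring.mul_inverse_cancel _ hw₁u
  have hww' : W * w₁ = 1 := Ring.inverse_mul_cancel _ hw₁u
  set r : A := 1 - (tz / 2) • (F * f₂) with hrdef
  set ri : A := Ring.inverse r with hridef
  have hrr : r * ri = 1 := Ring.mul_inverse_cancel _ hru
  have hrr' : ri * r = 1 := Ring.inverse_mul_cancel _ hru
  set rr : A := 1 - (tz / 2) • (W * w₂) with hrrdef
  set Ri : A := Ring.inverse rr with hRidef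
  have hRR : rr * Ri = 1 := Ring.mul_inverse_cancel _ hrwu
  have hRR' : Ri * rr = 1 := Ring.inverse_mul_cancel _ hrwu
  -- p is a unit
  have hpw : p = w₁ * (q * F) := by
    rw [hw₁]
    simp only [mul_assoc, K hqiq, hff, mul_one]
  have hpu : IsUnit p := by
    rw [hpw]; exact hw₁u.mul (hq.mul (isUnit_of_two_sided hff' hff))
  set pi : A := Ring.inverse p with hpidef
  have hpp : p * pi = 1 := Ring.mul_inverse_cancel _ hpu
  have hpp' : pi * p = 1 := Ring.inverse_mul_cancel _ hpu
  -- inverse of w₁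
  have hwiq : W = q * (F * pi) := by
    have h1 : w₁ * (q * (F * pi)) = 1 := by
      rw [hw₁]; simp only [mul_assoc, K hqiq, K hff, hpp]
    calc W = W * (w₁ * (q * (F * pi))) := by rw [h1, mul_one]
    _ = (W * w₁) * (q * (F * pi)) := by rw [mul_assoc]
    _ = q * (F * pi) := by rw [hww', one_mul]
  -- key: W * w₂
  have hWw₂ : W * w₂ = q * (F * (f₂ * qi)) - (2 : ℂ) • (c * (f₁ * qi)) := by
    rw [hwiq, hw₂]
    simp only [mul_sub, mul_smul_comm, mul_assoc, K hpp', K hff', K hqqi]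
  -- rr = s * qi
  set s : A := q * r + tz • (c * f₁) with hsdef
  have hrws : rr = s * qi := by
    rw [hrrdef, hWw₂, hsdef, hrdef]
    simp only [mul_sub, sub_mul, add_mul, mul_one, one_mul, smul_mul_assoc,
      mul_smul_comm, smul_sub, smul_smul, mul_assoc, hqqi]
    match_scalars <;> ring
  have hs : s = rr * q := by rw [hrws, mul_assoc, hqiq, mul_one]
  have hsu : IsUnit s := by rw [hs]; exact hrwu.mul hq
  set si : A := Ring.inverse s with hsidef
  have hss : s * si = 1 := Ring.mul_inverse_cancel _ hsu
  have hss' : si * s = 1 := Ring.inverse_mul_cancel _ hsu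
  -- inverse of rr
  have hRi : Ri = q * si := by
    have h1 : rr * (q * si) = 1 := by
      rw [hrws]; simp only [mul_assoc, K hqiq, hss]
    calc Ri = Ri * (rr * (q * si)) := by rw [h1, mul_one]
    _ = (Ri * rr) * (q * si) := by rw [mul_assoc]
    _ = q * si := by rw [hRR', one_mul]
  -- c * ft z + d
  have hq' : c * (f₀ + tz • (f₁ * ri)) + d = s * ri := by
    have h2 : s * ri = q + tz • (c * (f₁ * ri)) := by
      rw [hsdef]
      simp only [add_mul, smul_mul_assoc, mul_assoc, hrr, mul_one]
    rw [h2, hqdef]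
    simp only [mul_add, mul_smul_comm, mul_assoc]
    abel
  have hcftinv : Ring.inverse (c * (f₀ + tz • (f₁ * ri)) + d) = r * si := by
    apply inv_unique' hftu
    rw [hq']
    simp only [mul_assoc, K hrr', hss]
  rw [hcftinv, hRi, hw₁, hpdef, hw₀]
  -- now expand everything and compare coefficients
  have hrsi : r * si = qi - tz • (qi * (c * (f₁ * si))) := by
    have hqr : q * r = s - tz • (c * f₁) := by rw [hsdef, add_sub_cancel_right]
    calc r * si = qi * (q * (r * si)) := (K hqiq _).symm
    _ = qi * ((q * r) * si) := by rw [mul_assoc]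
    _ = qi * ((s - tz • (c * f₁)) * si) := by rw [hqr]
    _ = qi * (s * si) - tz • (qi * (c * (f₁ * si))) := by
        simp only [mul_sub, sub_mul, smul_mul_assoc, mul_smul_comm, mul_assoc]
    _ = qi - tz • (qi * (c * (f₁ * si))) := by rw [hss, mul_one]
  simp only [add_mul, mul_add, sub_mul, smul_mul_assoc, mul_smul_comm, mul_assoc, K hrr']
  rw [hrsi]
  simp only [mul_sub, sub_mul, mul_add, add_mul, smul_sub, smul_add, smul_smul,
    smul_mul_assoc, mul_smul_comm, mul_assoc, K hqiq]
  match_scalars <;> ring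


theorem hasDerivAt_ringInverse_comp {A : Type*} [NormedRing A] [NormedAlgebra ℂ A]
    [CompleteSpace A] {u : ℂ → A} {u' : A} {z : ℂ}
    (h : HasDerivAt u u' z) (hu : IsUnit (u z)) :
    HasDerivAt (fun x => Ring.inverse (u x))
      (-(Ring.inverse (u z) * u' * Ring.inverse (u z))) z := by
  obtain ⟨x, hx⟩ := hu
  have H := (hasFDerivAt_ringInverse (𝕜 := ℂ) x)
  rw [hx] at H
  have H2 := H.comp_hasDerivAt z h
  refine H2.congr_deriv ?_
  simp [← hx, Ring.inverse_unit, ContinuousLinearMap.mulLeftRight_apply]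

theorem sigma_deriv_rel {A : Type*} [NormedRing A] {U : Set ℂ} (hU : IsOpen U) {σ : ℂ → ℂ}
    (hσ : AnalyticOnNhd ℂ σ U) (hσU : Set.MapsTo σ U U) {g : ℂ → ℂ}
    (hg : AnalyticOnNhd ℂ g U) (hginv : ∀ z ∈ U, g (σ z) = g z) :
    ∀ z ∈ U, deriv g z = deriv σ z * deriv g (σ z) := by
  intro ζ hζ
  have h1 : HasDerivAt (fun u => g (σ u)) (deriv σ ζ • deriv g (σ ζ)) ζ := by
    have := HasDerivAt.scomp (x := ζ) (h := σ)
      ((hg _ (hσU hζ)).differentiableAt.hasDerivAt)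
      ((hσ ζ hζ).differentiableAt.hasDerivAt)
    simpa [Function.comp_def] using this
  have heq : (fun u => g (σ u)) =ᶠ[nhds ζ] g := by
    filter_upwards [hU.mem_nhds hζ] with u hu using hginv u hu
  have h2 := heq.deriv_eq
  rw [h1.deriv] at h2
  rw [← h2, smul_eq_mul]

theorem F1_law {A : Type*} [NormedRing A] [NormedAlgebra ℂ A] [CompleteSpace A]
    {U : Set ℂ} (hU : IsOpen U) {σ : ℂ → ℂ}
    (hσ : AnalyticOnNhd ℂ σ U) (hσU : Set.MapsTo σ U U)
    {a b c d : A} {f : ℂ → A} {g : ℂ → ℂ}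
    (hf : AnalyticOnNhd ℂ f U) (hg : AnalyticOnNhd ℂ g U)
    (hginv : ∀ z ∈ U, g (σ z) = g z)
    (hg' : ∀ z ∈ U, deriv g z ≠ 0)
    (hunit : ∀ z ∈ U, IsUnit (c * f z + d))
    (hequiv : ∀ z ∈ U, f (σ z) = (a * f z + b) * Ring.inverse (c * f z + d)) :
    ∀ z ∈ U, (deriv g (σ z))⁻¹ • deriv f (σ z) =
      (a - f (σ z) * c) * ((deriv g z)⁻¹ • deriv f z) * Ring.inverse (c * f z + d) := by
  intro ζ hζ
  have hω : σ ζ ∈ U := hσU hζ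
  have hDf : HasDerivAt f (deriv f ζ) ζ := (hf ζ hζ).differentiableAt.hasDerivAt
  have hDσ : HasDerivAt σ (deriv σ ζ) ζ := (hσ ζ hζ).differentiableAt.hasDerivAt
  have H1 : HasDerivAt (fun u => f (σ u)) (deriv σ ζ • deriv f (σ ζ)) ζ := by
    have := HasDerivAt.scomp (x := ζ) (h := σ)
      ((hf _ hω).differentiableAt.hasDerivAt) hDσ
    simpa [Function.comp_def] using this
  have HQi := hasDerivAt_ringInverse_comp ((hDf.const_mul c).add_const d) (hunit ζ hζ)
  have H2 : HasDerivAt (fun u => (a * f u + b) * Ring.inverse (c * f u + d)) _ ζ :=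
    ((hDf.const_mul a).add_const b).mul HQi
  have heq : (fun u => f (σ u)) =ᶠ[nhds ζ]
      fun u => (a * f u + b) * Ring.inverse (c * f u + d) := by
    filter_upwards [hU.mem_nhds hζ] with u hu using hequiv u hu
  have hder := heq.deriv_eq
  rw [H1.deriv, H2.deriv] at hder
  have hσg := sigma_deriv_rel (A := A) hU hσ hσU hg hginv ζ hζ
  have hgζ := hg' ζ hζ
  have hgω := hg' _ hω
  have hσne : deriv σ ζ ≠ 0 := by
    intro h0; exact hgζ (by rw [hσg, h0, zero_mul])
  have key : (deriv g (σ ζ))⁻¹ • deriv f (σ ζ)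
      = (deriv g ζ)⁻¹ • (deriv σ ζ • deriv f (σ ζ)) := by
    rw [smul_smul]
    congr 1
    rw [hσg]
    field_simp
  rw [key, hder, hequiv ζ hζ]
  simp only [mul_neg, neg_mul, mul_sub, sub_mul, add_mul, mul_add, smul_mul_assoc,
    mul_smul_comm, smul_neg, smul_add, smul_sub, mul_assoc]
  match_scalars <;> ring

theorem F2_law {A : Type*} [NormedRing A] [NormedAlgebra ℂ A] [CompleteSpace A]
    {U : Set ℂ} (hU : IsOpen U) {σ : ℂ → ℂ}
    (hσ : AnalyticOnNhd ℂ σ U) (hσU : Set.MapsTo σ U U)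
    {a b c d : A} {f : ℂ → A} {g : ℂ → ℂ}
    (hf : AnalyticOnNhd ℂ f U) (hg : AnalyticOnNhd ℂ g U)
    (hginv : ∀ z ∈ U, g (σ z) = g z)
    (hg' : ∀ z ∈ U, deriv g z ≠ 0)
    (hunit : ∀ z ∈ U, IsUnit (c * f z + d))
    (fd : ℂ → A) (hfdA : AnalyticOnNhd ℂ fd U)
    (hfd : ∀ z ∈ U, fd z = (deriv g z)⁻¹ • deriv f z)
    (hF1 : ∀ z ∈ U, fd (σ z) = (a - f (σ z) * c) * fd z * Ring.inverse (c * f z + d)) :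
    ∀ z ∈ U, (deriv g (σ z))⁻¹ • deriv fd (σ z) =
      (a - f (σ z) * c) * ((deriv g z)⁻¹ • deriv fd z) * Ring.inverse (c * f z + d)
      - (2 : ℂ) • ((a - f (σ z) * c) * fd z * Ring.inverse (c * f z + d) *
          (c * (fd z * Ring.inverse (c * f z + d)))) := by
  intro ζ hζ
  have hω : σ ζ ∈ U := hσU hζ
  have hDf : HasDerivAt f (deriv f ζ) ζ := (hf ζ hζ).differentiableAt.hasDerivAt
  have hDσ : HasDerivAt σ (deriv σ ζ) ζ := (hσ ζ hζ).differentiableAt.hasDerivAt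
  have hDfd : HasDerivAt fd (deriv fd ζ) ζ := (hfdA ζ hζ).differentiableAt.hasDerivAt
  have H1 : HasDerivAt (fun u => fd (σ u)) (deriv σ ζ • deriv fd (σ ζ)) ζ := by
    have := HasDerivAt.scomp (x := ζ) (h := σ)
      ((hfdA _ hω).differentiableAt.hasDerivAt) hDσ
    simpa [Function.comp_def] using this
  have Hfσ : HasDerivAt (fun u => f (σ u)) (deriv σ ζ • deriv f (σ ζ)) ζ := by
    have := HasDerivAt.scomp (x := ζ) (h := σ)
      ((hf _ hω).differentiableAt.hasDerivAt) hDσ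
    simpa [Function.comp_def] using this
  have hA : HasDerivAt (fun u => a - f (σ u) * c)
      (-(deriv σ ζ • deriv f (σ ζ) * c)) ζ := (Hfσ.mul_const c).const_sub a
  have HQi := hasDerivAt_ringInverse_comp ((hDf.const_mul c).add_const d) (hunit ζ hζ)
  have H2 : HasDerivAt (fun u => (a - f (σ u) * c) * fd u * Ring.inverse (c * f u + d))
      (((-(deriv σ ζ • deriv f (σ ζ) * c)) * fd ζ + (a - f (σ ζ) * c) * deriv fd ζ) *
        Ring.inverse (c * f ζ + d) + (a - f (σ ζ) * c) * fd ζ *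
        -(Ring.inverse (c * f ζ + d) * (c * deriv f ζ) * Ring.inverse (c * f ζ + d))) ζ :=
    (hA.mul hDfd).mul HQi
  have heq : (fun u => fd (σ u)) =ᶠ[nhds ζ]
      fun u => (a - f (σ u) * c) * fd u * Ring.inverse (c * f u + d) := by
    filter_upwards [hU.mem_nhds hζ] with u hu using hF1 u hu
  have hder := heq.deriv_eq
  rw [H1.deriv, H2.deriv] at hder
  have hσg := sigma_deriv_rel (A := A) hU hσ hσU hg hginv ζ hζ
  have hgζ := hg' ζ hζ
  have hgω := hg' _ hω
  have hσne : deriv σ ζ ≠ 0 := by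
    intro h0; exact hgζ (by rw [hσg, h0, zero_mul])
  have e1 : deriv σ ζ • deriv f (σ ζ) = deriv g ζ • fd (σ ζ) := by
    rw [hfd _ hω, smul_smul]
    congr 1
    rw [hσg]
    field_simp
  have e2 : deriv f ζ = deriv g ζ • fd ζ := by
    rw [hfd ζ hζ, smul_smul, mul_inv_cancel₀ hgζ, one_smul]
  rw [e1, e2] at hder
  have key : (deriv g (σ ζ))⁻¹ • deriv fd (σ ζ)
      = (deriv g ζ)⁻¹ • (deriv σ ζ • deriv fd (σ ζ)) := by
    rw [smul_smul]
    congr 1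
    rw [hσg]
    field_simp
  rw [key, hder, hF1 ζ hζ]
  simp only [mul_neg, neg_mul, mul_sub, sub_mul, add_mul, mul_add, smul_mul_assoc,
    mul_smul_comm, smul_neg, smul_add, smul_sub, smul_smul, mul_assoc]
  match_scalars <;> (try field_simp) <;> ring


/-- Theorem 1 of the paper (pointwise version): deformation of an equivariant
Banach-algebra-valued function by an invariant scalar parameter remains equivariant. -/
theorem equivariant_deformation
    (A : Type*) [NormedRing A] [NormedAlgebra ℂ A] [CompleteSpace A]
    (U : Set ℂ) (hU : IsOpen U)
    (σ : ℂ → ℂ) (hσ : AnalyticOnNhd ℂ σ U) (hσU : Set.MapsTo σ U U)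
    (a b c d : A)
    (f : ℂ → A) (g t : ℂ → ℂ)
    (hf : AnalyticOnNhd ℂ f U) (hg : AnalyticOnNhd ℂ g U) (ht : AnalyticOnNhd ℂ t U)
    (hginv : ∀ z ∈ U, g (σ z) = g z)
    (htinv : ∀ z ∈ U, t (σ z) = t z)
    (hg' : ∀ z ∈ U, deriv g z ≠ 0)
    (hunit : ∀ z ∈ U, IsUnit (c * f z + d))
    (hequiv : ∀ z ∈ U, f (σ z) = (a * f z + b) * Ring.inverse (c * f z + d))
    (fd fdd ft : ℂ → A)
    (hfd : ∀ z, fd z = (deriv g z)⁻¹ • deriv f z)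
    (hfdd : ∀ z, fdd z = (deriv g z)⁻¹ • deriv fd z)
    (hft : ∀ z, ft z = f z +
      t z • (fd z * Ring.inverse (1 - (t z / 2) • (Ring.inverse (fd z) * fdd z)))) :
    ∀ z ∈ U, IsUnit (fd z) → IsUnit (fd (σ z)) →
      IsUnit (1 - (t z / 2) • (Ring.inverse (fd z) * fdd z)) →
      IsUnit (1 - (t (σ z) / 2) • (Ring.inverse (fd (σ z)) * fdd (σ z))) →
      IsUnit (c * ft z + d) →
      ft (σ z) = (a * ft z + b) * Ring.inverse (c * ft z + d) := by
  intro z hz hu1 hu2 hu3 hu4 hu5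
  have hw : σ z ∈ U := hσU hz
  have hfdA : AnalyticOnNhd ℂ fd U := by
    have hfdEq : fd = fun u => (deriv g u)⁻¹ • deriv f u := funext hfd
    rw [hfdEq]
    intro u hu
    exact ((hg.deriv u hu).inv (hg' u hu)).smul (hf.deriv u hu)
  have hF1 : ∀ ζ ∈ U, fd (σ ζ) = (a - f (σ ζ) * c) * fd ζ * Ring.inverse (c * f ζ + d) := by
    intro ζ hζ
    rw [hfd (σ ζ), hfd ζ]
    exact F1_law hU hσ hσU hf hg hginv hg' hunit hequiv ζ hζ
  have hF2 : fdd (σ z) = (a - f (σ z) * c) * fdd z * Ring.inverse (c * f z + d)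
      - (2 : ℂ) • ((a - f (σ z) * c) * fd z * Ring.inverse (c * f z + d) *
          (c * (fd z * Ring.inverse (c * f z + d)))) := by
    rw [hfdd (σ z), hfdd z]
    exact F2_law (b := b) hU hσ hσU hf hg hginv hg' hunit fd hfdA (fun u _ => hfd u) hF1 z hz
  rw [hft z] at hu5
  rw [htinv z hz] at hu4
  rw [hft (σ z), hft z, htinv z hz]
  exact alg_key a b c d (f z) (fd z) (fdd z) (f (σ z)) (fd (σ z)) (fdd (σ z)) (t z)
    (hunit z hz) (hequiv z hz) (hF1 z hz) hF2 hu1 hu2 hu3 hu4 hu5
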